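/- Let q = 2^s and consider S = F_q[y_1,y_2,x_2,x_1] with ξ_i = Σ_{j=1}^2 (x_j y_j^{q^i} + y_j x_j^{q^i}). Then u_2 = ξ_3 ξ_1^q + ξ_2^{q+1} + ξ_1^{q^2+1}, where u_2 is the Moore-type determinant det(v_j^{q^{i-1}})_{1≤i,j≤4} in the variables x_1, x_2, y_2, y_1 (equivalently the orbit product Π N(y_i)N(x_i) over the unipotent upper triangular subgroup). -/
import Mathlib


open MvPolynomial

/-- `ξ_i = Σ_j (x_j y_j^{q^i} + y_j x_j^{q^i})` in `S = F_q[y_1,y_2,x_2,x_1]`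
(`inl j` is `y_j`, `inr j` is `x_j`). -/
noncomputable def xiGen (q : ℕ) (F : Type*) [Field F] (i : ℕ) :
    MvPolynomial (Fin 2 ⊕ Fin 2) F :=
  ∑ j : Fin 2, (X (Sum.inr j) * X (Sum.inl j) ^ q ^ i
    + X (Sum.inl j) * X (Sum.inr j) ^ q ^ i)

/-- The Moore-type determinant `u_2 = det (v_j^{q^{i-1}})` in the variables
`x_1, x_2, y_2, y_1`. -/
noncomputable def uTwo (q : ℕ) (F : Type*) [Field F] : MvPolynomial (Fin 2 ⊕ Fin 2) F :=
  (Matrix.of fun i j : Fin 4 =>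
    (![X (Sum.inr 0), X (Sum.inr 1), X (Sum.inl 1), X (Sum.inl 0)] j :
      MvPolynomial (Fin 2 ⊕ Fin 2) F) ^ q ^ (i : ℕ)).det

/-- Key determinant identity in characteristic 2. -/
lemma det_key {R : Type*} [CommRing R] (h2 : (2:R) = 0)
    (A0 A1 A2 A3 B0 B1 B2 B3 C0 C1 C2 C3 D0 D1 D2 D3 : R) :
    (!![A0,B0,C0,D0; A1,B1,C1,D1; A2,B2,C2,D2; A3,B3,C3,D3]).det
    = (A0*D3+D0*A3+B0*C3+C0*B3)*(A1*D2+D1*A2+B1*C2+C1*B2)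
    + (A0*D2+D0*A2+B0*C2+C0*B2)*(A1*D3+D1*A3+B1*C3+C1*B3)
    + (A0*D1+D0*A1+B0*C1+C0*B1)*(A2*D3+D2*A3+B2*C3+C2*B3) := by
  simp only [Matrix.det_succ_row_zero, Matrix.det_fin_three, Fin.sum_univ_succ,
    Fin.sum_univ_zero, Matrix.submatrix_apply, Fin.zero_succAbove, Fin.succ_succAbove_zero,
    Fin.succ_succAbove_one, Fin.succ_succAbove_succ, Fin.succ_zero_eq_one, Fin.succ_one_eq_two,
    Matrix.cons_val_zero, Matrix.cons_val_one, Matrix.head_cons, Matrix.cons_val_succ,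
    Fin.val_zero, Fin.val_succ, pow_zero, pow_succ, pow_one, Matrix.cons_val',
    Matrix.empty_val', Matrix.cons_val_fin_one, Matrix.head_fin_const, Matrix.of_apply,
    one_mul, neg_mul, mul_one, neg_neg, Matrix.det_fin_zero, Matrix.det_unique,
    Fin.default_eq_zero, Matrix.cons_val_two, Matrix.cons_val_three, Matrix.tail_cons]
  simp only [show Fin.succAbove (1:Fin 4) 2 = 3 from rfl, show Fin.succAbove (2:Fin 4) 2 = 3 from rfl,
    show Fin.succAbove (Fin.succ (2:Fin 3)) 2 = 2 from rfl,
    Matrix.cons_val_two, Matrix.cons_val_three, Matrix.tail_cons, Matrix.head_cons]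
  linear_combination (- A0*A1*D2*D3 - A0*A2*D1*D3 - A0*A3*D1*D2 - A0*B1*C3*D2 - A0*B2*C1*D3 - A0*B3*C2*D1 - A1*A2*D0*D3 - A1*A3*D0*D2 - A1*B0*C2*D3 - A1*B2*C3*D0 - A1*B3*C0*D2 - A2*A3*D0*D1 - A2*B0*C3*D1 - A2*B1*C0*D3 - A2*B3*C1*D0 - A3*B0*C1*D2 - A3*B1*C2*D0 - A3*B2*C0*D1 - B0*B1*C2*C3 - B0*B2*C1*C3 - B0*B3*C1*C2 - B1*B2*C0*C3 - B1*B3*C0*C2 - B2*B3*C0*C1) * h2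

/-- `u_2 = ξ_3 ξ_1^q + ξ_2^{q+1} + ξ_1^{q^2+1}`. -/
theorem stmt_7 {F : Type*} [Field F] [Fintype F] (s q : ℕ) (hs : 1 ≤ s)
    (hq : q = 2 ^ s) (hF : Fintype.card F = q) :
    uTwo q F = xiGen q F 3 * xiGen q F 1 ^ q + xiGen q F 2 ^ (q + 1)
      + xiGen q F 1 ^ (q ^ 2 + 1) := by
  -- characteristic 2
  haveI hchar : CharP F 2 := by
    obtain ⟨n, hp, hcard⟩ := FiniteField.card F (ringChar F)
    have hd : ringChar F ∣ 2 ^ s := by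
      rw [← hq, ← hF, hcard]
      exact dvd_pow_self _ n.ne_zero
    have h2 : ringChar F = 2 :=
      (Nat.prime_dvd_prime_iff_eq hp Nat.prime_two).mp (hp.dvd_of_dvd_pow hd)
    exact h2 ▸ ringChar.charP F
  have h2 : (2 : MvPolynomial (Fin 2 ⊕ Fin 2) F) = 0 := by
    have := CharP.cast_eq_zero (MvPolynomial (Fin 2 ⊕ Fin 2) F) 2
    exact_mod_cast this
  have hfr : ∀ a b : MvPolynomial (Fin 2 ⊕ Fin 2) F, (a + b) ^ q = a ^ q + b ^ q := by
    haveI : Fact (Nat.Prime 2) := ⟨Nat.prime_two⟩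
    subst hq
    exact fun a b => add_pow_char_pow a b 2 s
  set a : MvPolynomial (Fin 2 ⊕ Fin 2) F := X (Sum.inr 0) with ha
  set b : MvPolynomial (Fin 2 ⊕ Fin 2) F := X (Sum.inr 1) with hb
  set c : MvPolynomial (Fin 2 ⊕ Fin 2) F := X (Sum.inl 1) with hc
  set d : MvPolynomial (Fin 2 ⊕ Fin 2) F := X (Sum.inl 0) with hd
  have hpp : ∀ (x : MvPolynomial (Fin 2 ⊕ Fin 2) F) (i : ℕ),
      (x ^ q ^ i) ^ q = x ^ q ^ (i + 1) := by
    intro x i; rw [← pow_mul, ← pow_succ]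
  have hxi : ∀ i, xiGen q F i
      = a * d ^ q ^ i + d * a ^ q ^ i + (b * c ^ q ^ i + c * b ^ q ^ i) := by
    intro i
    simp [xiGen, Fin.sum_univ_two, ha, hb, hc, hd]
  -- the determinant
  have hu : uTwo q F =
      (!![a ^ q ^ 0, b ^ q ^ 0, c ^ q ^ 0, d ^ q ^ 0;
          a ^ q ^ 1, b ^ q ^ 1, c ^ q ^ 1, d ^ q ^ 1;
          a ^ q ^ 2, b ^ q ^ 2, c ^ q ^ 2, d ^ q ^ 2;
          a ^ q ^ 3, b ^ q ^ 3, c ^ q ^ 3, d ^ q ^ 3]).det := by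
    unfold uTwo
    congr 1
    ext i j
    fin_cases i <;> fin_cases j <;> rfl
  rw [hu, det_key h2]
  -- expand the right-hand side
  have e1q : xiGen q F 1 ^ q
      = a ^ q ^ 1 * d ^ q ^ 2 + d ^ q ^ 1 * a ^ q ^ 2
        + (b ^ q ^ 1 * c ^ q ^ 2 + c ^ q ^ 1 * b ^ q ^ 2) := by
    rw [hxi, hfr, hfr, hfr, mul_pow, mul_pow, mul_pow, mul_pow, hpp, hpp, hpp, hpp]
    rw [show ∀ x : MvPolynomial (Fin 2 ⊕ Fin 2) F, x ^ q = x ^ q ^ 1 by intro x; rw [pow_one]]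
    ring
  have e2q : xiGen q F 2 ^ q
      = a ^ q ^ 1 * d ^ q ^ 3 + d ^ q ^ 1 * a ^ q ^ 3
        + (b ^ q ^ 1 * c ^ q ^ 3 + c ^ q ^ 1 * b ^ q ^ 3) := by
    rw [hxi, hfr, hfr, hfr, mul_pow, mul_pow, mul_pow, mul_pow, hpp, hpp, hpp, hpp]
    rw [show ∀ x : MvPolynomial (Fin 2 ⊕ Fin 2) F, x ^ q = x ^ q ^ 1 by intro x; rw [pow_one]]
    ring
  have e1qq : xiGen q F 1 ^ q ^ 2
      = a ^ q ^ 2 * d ^ q ^ 3 + d ^ q ^ 2 * a ^ q ^ 3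
        + (b ^ q ^ 2 * c ^ q ^ 3 + c ^ q ^ 2 * b ^ q ^ 3) := by
    have h0 : xiGen q F 1 ^ q ^ 2 = (xiGen q F 1 ^ q) ^ q := by
      rw [← pow_mul, ← pow_two]
    rw [h0, e1q, hfr, hfr, hfr, mul_pow, mul_pow, mul_pow, mul_pow]
    simp only [hpp]
  rw [pow_add (xiGen q F 2) q 1, pow_one, pow_add (xiGen q F 1) (q ^ 2) 1, pow_one,
    hxi 3, e1q, e2q, hxi 2, e1qq, hxi 1]
  simp only [pow_zero, pow_one]
  ring
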